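/- Fix n ≥ 1 and κ > 0, and let C be a symmetric positive definite n×n real matrix. Suppose g is a function assigning a 'portfolio turnover' to each weight vector x ∈ ℝⁿ via g(x) = f(Σᵢ xᵢ αᵢ), where (α₁,…,αₙ) are vectors in an inner product space with Gram matrix C, f is absolutely homogeneous of degree 1, f(v) = F(Gram data, values of f) for all pairs as in the main theorem, and f(αᵢ)/√(Cᵢᵢ) = κ for all i. Then g(x) = κ·√(xᵀ C x) for every x ∈ ℝⁿ. -/

import Mathlib

open scoped RealInnerProductSpace
open Matrix

theorem stmt9 {V : Type*} [NormedAddCommGroup V] [InnerProductSpace ℝ V]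
    {n : ℕ} (hn : 1 ≤ n) (κ : ℝ) (hκ : 0 < κ)
    (C : Matrix (Fin n) (Fin n) ℝ) (hsymm : C.IsSymm) (hpd : C.PosDef)
    (α : Fin n → V) (hGram : ∀ i j, ⟪α i, α j⟫ = C i j)
    (f : V → ℝ)
    (hhom : ∀ (l : ℝ) (v : V), f (l • v) = |l| * f v)
    (F : ℝ → ℝ → ℝ → ℝ → ℝ → ℝ)
    (hF : ∀ u v : V, f (u + v) = F ⟪u, u⟫ ⟪u, v⟫ ⟪v, v⟫ (f u) (f v))
    (hκeq : ∀ i, f (α i) / Real.sqrt (C i i) = κ)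
    (g : (Fin n → ℝ) → ℝ)
    (hg : ∀ x : Fin n → ℝ, g x = f (∑ i, x i • α i)) :
    ∀ x : Fin n → ℝ, g x = κ * Real.sqrt (x ⬝ᵥ C.mulVec x) := by
  -- f is even and f 0 = 0
  have hneg : ∀ v : V, f (-v) = f v := by
    intro v
    have := hhom (-1) v
    simpa using this
  -- f is constant on spheres
  have hsphere : ∀ a b : V, ‖a‖ = ‖b‖ → f a = f b := by
    intro a b hab
    set u := (2:ℝ)⁻¹ • (a + b) with hu
    set v := (2:ℝ)⁻¹ • (a - b) with hv
    have huv : ⟪u, v⟫ = 0 := by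
      rw [hu, hv, real_inner_smul_left, real_inner_smul_right, inner_add_left,
        inner_sub_right, inner_sub_right, real_inner_self_eq_norm_sq,
        real_inner_self_eq_norm_sq, real_inner_comm b a, hab]
      ring
    have ha : a = u + v := by rw [hu, hv]; module
    have hb : b = u + (-v) := by rw [hu, hv]; module
    rw [ha, hb, hF u v, hF u (-v), inner_neg_right, huv, inner_neg_neg, hneg v]
    ring_nf
  have hf0 : f 0 = 0 := by
    have := hhom 0 0
    simpa using this
  -- a basic index
  have i0 : Fin n := ⟨0, hn⟩
  have hC0 : (0:ℝ) < C i0 i0 := by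
    have h := (posDef_iff_dotProduct_mulVec.mp hpd).2 (x := fun j => if j = i0 then 1 else 0) (by
      intro h'
      have := congrFun h' i0
      simp at this)
    have heq : (star fun j => if j = i0 then (1:ℝ) else 0) ⬝ᵥ C *ᵥ
        (fun j => if j = i0 then 1 else 0) = C i0 i0 := by
      simp [dotProduct, Matrix.mulVec, Finset.sum_ite_eq, Finset.sum_ite_eq']
    rwa [heq] at h
  have hnorm0 : ‖α i0‖ = Real.sqrt (C i0 i0) := by
    rw [← hGram i0 i0, real_inner_self_eq_norm_sq]
    rw [Real.sqrt_sq (norm_nonneg _)]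
  have hfα : f (α i0) = κ * ‖α i0‖ := by
    have h := hκeq i0
    have hs : Real.sqrt (C i0 i0) > 0 := Real.sqrt_pos.mpr hC0
    field_simp at h
    rw [hnorm0, h, mul_comm]
  -- f v = κ * ‖v‖ for all v
  have hkey : ∀ v : V, f v = κ * ‖v‖ := by
    intro v
    rcases eq_or_ne v 0 with rfl | hv
    · simp [hf0]
    · have hs : (0:ℝ) < ‖v‖ := norm_pos_iff.mpr hv
      have ht : (0:ℝ) < ‖α i0‖ := by
        rw [hnorm0]; exact Real.sqrt_pos.mpr hC0
      set w := (‖α i0‖ / ‖v‖) • v with hw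
      have hwn : ‖w‖ = ‖α i0‖ := by
        rw [hw, norm_smul, Real.norm_eq_abs, abs_of_pos (div_pos ht hs)]
        field_simp
      have hfw : f w = κ * ‖α i0‖ := by
        rw [hsphere w (α i0) hwn, hfα]
      have hvw : v = (‖v‖ / ‖α i0‖) • w := by
        rw [hw, smul_smul]
        rw [div_mul_div_comm, mul_comm (‖v‖) (‖α i0‖), div_self (by positivity)]
        simp
      have h1 : f v = (‖v‖ / ‖α i0‖) * (κ * ‖α i0‖) := by
        conv_lhs => rw [hvw]
        rw [hhom, hfw, abs_of_pos (div_pos hs ht)]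
      rw [h1]
      field_simp
  intro x
  rw [hg x, hkey]
  congr 1
  -- ‖∑ x i • α i‖ = √(x ⬝ᵥ C *ᵥ x)
  have hin : ⟪∑ i, x i • α i, ∑ i, x i • α i⟫ = x ⬝ᵥ C.mulVec x := by
    rw [sum_inner]
    simp only [inner_sum, real_inner_smul_left, real_inner_smul_right, hGram]
    simp [dotProduct, Matrix.mulVec, Finset.mul_sum]
    congr 1
    ext i
    congr 1
    ext j
    ring
  rw [← hin, real_inner_self_eq_norm_sq, Real.sqrt_sq (norm_nonneg _)]
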